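/- Fix an integer n ≥ 2. Let 𝓜 be a complex algebra isomorphic (as an algebra) to the full matrix algebra M_k(ℂ) for some k ∈ ℕ, let X be a complex linear space, and let P : 𝓜 → X be an orthogonally additive n-homogeneous polynomial. Then there exists a unique linear map Φ : 𝓜 → X such that P(a) = Φ(aⁿ) for every a ∈ 𝓜. Moreover, if φ : 𝓜ⁿ → X is the symmetric n-linear map associated with P and e is the identity of 𝓜, then Φ(a) = φ(a, e, …, e) for every a ∈ 𝓜. -/

import Mathlib

open Finset Polynomial

section polyfun
variable {X : Type*} [AddCommGroup X] [Module ℂ X]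

lemma coeffs_eq_zero (N : ℕ) (x : ℕ → X) (S : Set ℂ) (hS : S.Infinite)
    (h : ∀ c ∈ S, ∑ j ∈ Finset.range N, c ^ j • x j = 0) : ∀ j < N, x j = 0 := by
  intro j hj
  rw [← Module.forall_dual_apply_eq_zero_iff ℂ]
  intro f
  set p : Polynomial ℂ := ∑ i ∈ Finset.range N, Polynomial.C (f (x i)) * Polynomial.X ^ i with hp
  have hpe : ∀ c, p.eval c = f (∑ i ∈ Finset.range N, c ^ i • x i) := by
    intro c
    rw [map_sum, hp, Polynomial.eval_finset_sum]
    refine Finset.sum_congr rfl fun i _ => ?_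
    rw [Polynomial.eval_mul, Polynomial.eval_C, Polynomial.eval_pow, Polynomial.eval_X,
      map_smul, smul_eq_mul, mul_comm]
  have hp0 : p = 0 := by
    apply Polynomial.eq_zero_of_infinite_isRoot
    apply hS.mono
    intro c hc
    simp only [Set.mem_setOf_eq, Polynomial.IsRoot, hpe c, h c hc, map_zero]
  have hc := congrArg (fun q => Polynomial.coeff q j) hp0
  simp only [hp, Polynomial.finset_sum_coeff, Polynomial.coeff_C_mul, Polynomial.coeff_X_pow,
    Polynomial.coeff_zero, mul_ite, mul_one, mul_zero] at hc
  rwa [Finset.sum_ite_eq (Finset.range N) j (fun i => f (x i)),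
    if_pos (Finset.mem_range.mpr hj)] at hc

def IsPF (F : ℂ → X) : Prop :=
  ∃ (N : ℕ) (x : ℕ → X), ∀ c, F c = ∑ j ∈ Finset.range N, c ^ j • x j

lemma isPF_monomial (j : ℕ) (y : X) : IsPF (fun c => c ^ j • y) := by
  refine ⟨j + 1, fun i => if i = j then y else 0, fun c => ?_⟩
  rw [Finset.sum_congr rfl (fun i _ => by rw [smul_ite, smul_zero])]
  rw [Finset.sum_ite_eq' (Finset.range (j+1)) j, if_pos (Finset.mem_range.mpr (Nat.lt_succ_self j))]

lemma rep_mono {F : ℂ → X} {N N' : ℕ} (hNN : N ≤ N') (x : ℕ → X)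
    (h : ∀ c, F c = ∑ j ∈ Finset.range N, c ^ j • x j) :
    ∀ c, F c = ∑ j ∈ Finset.range N', c ^ j • (if j < N then x j else 0) := by
  intro c
  rw [h c]
  symm
  calc ∑ j ∈ Finset.range N', c ^ j • (if j < N then x j else 0)
      = ∑ j ∈ Finset.range N, c ^ j • (if j < N then x j else 0) :=
        (Finset.sum_subset (Finset.range_subset_range.mpr hNN)
          (fun i _ hiN => by rw [if_neg (by simpa using hiN), smul_zero])).symm
    _ = ∑ j ∈ Finset.range N, c ^ j • x j :=
        Finset.sum_congr rfl (fun i hi => by rw [if_pos (Finset.mem_range.mp hi)])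

lemma isPF_zero : IsPF (fun _ : ℂ => (0 : X)) := ⟨0, fun _ => 0, by simp⟩

lemma isPF_add {F G : ℂ → X} (hF : IsPF F) (hG : IsPF G) : IsPF (fun c => F c + G c) := by
  obtain ⟨N₁, x₁, hx₁⟩ := hF
  obtain ⟨N₂, x₂, hx₂⟩ := hG
  refine ⟨max N₁ N₂, fun j => (if j < N₁ then x₁ j else 0) + (if j < N₂ then x₂ j else 0),
    fun c => ?_⟩
  show F c + G c = _
  rw [rep_mono (le_max_left N₁ N₂) x₁ hx₁ c, rep_mono (le_max_right N₁ N₂) x₂ hx₂ c,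
    ← Finset.sum_add_distrib]
  exact Finset.sum_congr rfl fun i _ => (smul_add _ _ _).symm

lemma isPF_neg {F : ℂ → X} (hF : IsPF F) : IsPF (fun c => -F c) := by
  obtain ⟨N, x, hx⟩ := hF
  refine ⟨N, fun j => -x j, fun c => ?_⟩
  show -F c = _
  rw [hx c, ← Finset.sum_neg_distrib]
  exact Finset.sum_congr rfl fun i _ => (smul_neg _ _).symm

lemma isPF_sub {F G : ℂ → X} (hF : IsPF F) (hG : IsPF G) : IsPF (fun c => F c - G c) := by
  simpa [sub_eq_add_neg] using isPF_add hF (isPF_neg hG)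

lemma isPF_sum {ι : Type*} (s : Finset ι) (G : ι → ℂ → X) (h : ∀ i ∈ s, IsPF (G i)) :
    IsPF (fun c => ∑ i ∈ s, G i c) := by
  classical
  induction s using Finset.induction_on with
  | empty => simpa using isPF_zero
  | insert a s hns ih =>
    simp only [Finset.sum_insert hns]
    exact isPF_add (h a (Finset.mem_insert_self a s))
      (ih fun i hi => h i (Finset.mem_insert_of_mem hi))

lemma isPF_eval_smul (q : Polynomial ℂ) (y : X) : IsPF (fun c => q.eval c • y) := by
  refine ⟨q.natDegree + 1, fun j => q.coeff j • y, fun c => ?_⟩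
  show q.eval c • y = _
  rw [Polynomial.eval_eq_sum_range, Finset.sum_smul]
  exact Finset.sum_congr rfl fun i _ => by rw [smul_smul, mul_comm]

lemma isPF_vanish {F : ℂ → X} (hF : IsPF F) (S : Set ℂ) (hS : S.Infinite)
    (h : ∀ c ∈ S, F c = 0) : ∀ c, F c = 0 := by
  obtain ⟨N, x, hx⟩ := hF
  have h0 := coeffs_eq_zero N x S hS (fun c hc => by rw [← hx c]; exact h c hc)
  intro c
  rw [hx c]
  refine Finset.sum_eq_zero fun i hi => ?_
  rw [h0 i (Finset.mem_range.mp hi), smul_zero]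

end polyfun

lemma exists_perm_mem_iff {N : ℕ} (s t : Finset (Fin N)) (h : #s = #t) :
    ∃ σ : Equiv.Perm (Fin N), ∀ i, i ∈ s ↔ σ i ∈ t := by
  classical
  have hc : Fintype.card {x // x ∈ s} = Fintype.card {x // x ∈ t} := by
    simpa [Fintype.card_coe] using h
  have hc' : Fintype.card {x : Fin N // ¬ x ∈ s} = Fintype.card {x : Fin N // ¬ x ∈ t} := by
    rw [Fintype.card_subtype_compl, Fintype.card_subtype_compl, hc]
  refine ⟨Equiv.subtypeCongr (Fintype.equivOfCardEq hc) (Fintype.equivOfCardEq hc'),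
    fun i => ?_⟩
  constructor
  · intro hi
    have : Equiv.subtypeCongr (Fintype.equivOfCardEq hc) (Fintype.equivOfCardEq hc') i
        = ↑(Fintype.equivOfCardEq hc ⟨i, hi⟩) := by
      simp [Equiv.subtypeCongr, hi]
    rw [this]
    exact (Fintype.equivOfCardEq hc ⟨i, hi⟩).2
  · intro hti
    by_contra hi
    have : Equiv.subtypeCongr (Fintype.equivOfCardEq hc) (Fintype.equivOfCardEq hc') i
        = ↑(Fintype.equivOfCardEq hc' ⟨i, hi⟩) := by
      simp [Equiv.subtypeCongr, hi]
    rw [this] at hti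
    exact (Fintype.equivOfCardEq hc' ⟨i, hi⟩).2 hti

section alg
variable {n : ℕ} {M : Type*} [Ring M] [Algebra ℂ M]
  {X : Type*} [AddCommGroup X] [Module ℂ X]
  (φ : MultilinearMap ℂ (fun _ : Fin n => M) X)

lemma sym_piecewise (hsym : ∀ (v : Fin n → M) (σ : Equiv.Perm (Fin n)),
      φ (fun i => v (σ i)) = φ v)
    (s t : Finset (Fin n)) (h : #s = #t) (e f : M) :
    φ (s.piecewise (fun _ => e) (fun _ => f)) = φ (t.piecewise (fun _ => e) (fun _ => f)) := by
  classical
  obtain ⟨σ, hσ⟩ := exists_perm_mem_iff s t h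
  rw [← hsym (t.piecewise (fun _ => e) (fun _ => f)) σ]
  congr 1
  funext i
  by_cases hi : i ∈ s
  · rw [Finset.piecewise_eq_of_mem _ _ _ hi, Finset.piecewise_eq_of_mem _ _ _ ((hσ i).1 hi)]
  · rw [Finset.piecewise_eq_of_notMem _ _ _ hi,
      Finset.piecewise_eq_of_notMem _ _ _ (fun ht => hi ((hσ i).2 ht))]

lemma P_zero (hn : 0 < n) : φ (fun _ => (0:M)) = 0 :=
  φ.map_coord_zero (⟨0, hn⟩ : Fin n) rfl

lemma P_smul (c : ℂ) (a : M) : φ (fun _ => c • a) = c ^ n • φ (fun _ => a) := by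
  have := φ.map_smul_univ (fun _ => c) (fun _ => a)
  simpa using this

lemma P_orth_sum (hn : 0 < n) {ι : Type*} [DecidableEq ι]
    (hoa : ∀ a b : M, a * b = 0 → b * a = 0 →
      φ (fun _ => a + b) = φ (fun _ => a) + φ (fun _ => b))
    (s : Finset ι) (e : ι → M) (lam : ι → ℂ)
    (horth : ∀ i ∈ s, ∀ j ∈ s, i ≠ j → e i * e j = 0) :
    φ (fun _ => ∑ i ∈ s, lam i • e i) = ∑ i ∈ s, lam i ^ n • φ (fun _ => e i) := by
  induction s using Finset.induction_on with
  | empty => simpa using P_zero φ hn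
  | insert a s hns ih =>
    have horth' : ∀ i ∈ s, ∀ j ∈ s, i ≠ j → e i * e j = 0 := fun i hi j hj =>
      horth i (Finset.mem_insert_of_mem hi) j (Finset.mem_insert_of_mem hj)
    have h1 : (lam a • e a) * (∑ i ∈ s, lam i • e i) = 0 := by
      rw [Finset.mul_sum]
      refine Finset.sum_eq_zero fun i hi => ?_
      rw [smul_mul_assoc, mul_smul_comm,
        horth a (Finset.mem_insert_self a s) i (Finset.mem_insert_of_mem hi)
          (fun hai => hns (by rw [hai]; exact hi)), smul_zero, smul_zero]
    have h2 : (∑ i ∈ s, lam i • e i) * (lam a • e a) = 0 := by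
      rw [Finset.sum_mul]
      refine Finset.sum_eq_zero fun i hi => ?_
      rw [smul_mul_assoc, mul_smul_comm,
        horth i (Finset.mem_insert_of_mem hi) a (Finset.mem_insert_self a s)
          (fun hia => hns (by rw [← hia]; exact hi)), smul_zero, smul_zero]
    rw [Finset.sum_insert hns, Finset.sum_insert hns, hoa _ _ h1 h2, P_smul φ,
      ih horth']
end alg

section alg2
variable {n : ℕ} {M : Type*} [Ring M] [Algebra ℂ M]
  {X : Type*} [AddCommGroup X] [Module ℂ X]
  (φ : MultilinearMap ℂ (fun _ : Fin n => M) X)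
  (hsym : ∀ (v : Fin n → M) (σ : Equiv.Perm (Fin n)), φ (fun i => v (σ i)) = φ v)
  (hoa : ∀ a b : M, a * b = 0 → b * a = 0 →
      φ (fun _ => a + b) = φ (fun _ => a) + φ (fun _ => b))

include hsym hoa in
lemma cross_vanish (hn : 0 < n) (e : M) (he : e * e = e) :
    ∀ s : Finset (Fin n), s.Nonempty → s ≠ Finset.univ →
      φ (s.piecewise (fun _ => e) (fun _ => 1 - e)) = 0 := by
  classical
  set f : M := 1 - e with hf
  have hef : e * f = 0 := by rw [hf, mul_sub, he, mul_one, sub_self]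
  have hfe : f * e = 0 := by rw [hf, sub_mul, he, one_mul, sub_self]
  set y : Finset (Fin n) → X := fun s => φ (s.piecewise (fun _ => e) (fun _ => f)) with hy
  -- the polynomial identity in c
  have key : ∀ c : ℂ, ∑ s : Finset (Fin n), c ^ #s • y s
      = c ^ n • φ (fun _ => e) + φ (fun _ => f) := by
    intro c
    have h1 : φ (fun _ => c • e + f) = c ^ n • φ (fun _ => e) + φ (fun _ => f) := by
      have hcef : (c • e) * f = 0 := by rw [smul_mul_assoc, hef, smul_zero]
      have hcfe : f * (c • e) = 0 := by rw [mul_smul_comm, hfe, smul_zero]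
      rw [hoa _ _ hcef hcfe, P_smul φ]
    have h2 : φ (fun _ => c • e + f)
        = ∑ s : Finset (Fin n), φ (s.piecewise (fun _ => c • e) (fun _ => f)) := by
      exact φ.map_add_univ (fun _ => c • e) (fun _ => f)
    have h3 : ∀ s : Finset (Fin n),
        φ (s.piecewise (fun _ => c • e) (fun _ => f)) = c ^ #s • y s := by
      intro s
      have harg : s.piecewise (fun _ => c • e) (fun _ => f)
          = s.piecewise (fun i => c • (s.piecewise (fun _ => e) (fun _ => f)) i)
              (s.piecewise (fun _ => e) (fun _ => f)) := by
        funext i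
        by_cases hi : i ∈ s
        · rw [Finset.piecewise_eq_of_mem _ _ _ hi, Finset.piecewise_eq_of_mem _ _ _ hi,
            Finset.piecewise_eq_of_mem _ _ _ hi]
        · rw [Finset.piecewise_eq_of_notMem _ _ _ hi, Finset.piecewise_eq_of_notMem _ _ _ hi,
            Finset.piecewise_eq_of_notMem _ _ _ hi]
      rw [harg, φ.map_piecewise_smul (fun _ => c) _ s, Finset.prod_const, hy]
    rw [← h1, h2]
    exact Finset.sum_congr rfl fun s _ => (h3 s).symm
  -- group by cardinality and extract coefficients
  set x : ℕ → X := fun j => (∑ s ∈ Finset.univ.filter (fun s : Finset (Fin n) => #s = j), y s)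
      - (if j = n then φ (fun _ => e) else 0) - (if j = 0 then φ (fun _ => f) else 0) with hx
  have hzero : ∀ j < n + 1, x j = 0 := by
    apply coeffs_eq_zero (n+1) x Set.univ Set.infinite_univ
    intro c _
    have hgroup : ∑ s : Finset (Fin n), c ^ #s • y s
        = ∑ j ∈ Finset.range (n+1), ∑ s ∈ Finset.univ.filter (fun s : Finset (Fin n) => #s = j),
            c ^ #s • y s := by
      refine (Finset.sum_fiberwise_of_maps_to ?_ _).symm
      intro s _
      have h1 : #s ≤ n := by
        simpa using Finset.card_le_card (Finset.subset_univ s)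
      exact Finset.mem_range.mpr (Nat.lt_succ_of_le h1)
    have : ∀ j, ∑ s ∈ Finset.univ.filter (fun s : Finset (Fin n) => #s = j), c ^ #s • y s
        = c ^ j • ∑ s ∈ Finset.univ.filter (fun s : Finset (Fin n) => #s = j), y s := by
      intro j
      rw [Finset.smul_sum]
      refine Finset.sum_congr rfl fun s hs => ?_
      rw [(Finset.mem_filter.mp hs).2]
    have hen : c ^ n • φ (fun _ => e) + φ (fun _ => f)
        = ∑ j ∈ Finset.range (n+1), c ^ j • ((if j = n then φ (fun _ => e) else 0)
            + (if j = 0 then φ (fun _ => f) else 0)) := by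
      rw [Finset.sum_congr rfl (fun j _ => smul_add (c^j) _ _), Finset.sum_add_distrib]
      congr 1
      · rw [Finset.sum_congr rfl (fun j _ => by rw [smul_ite, smul_zero]),
          Finset.sum_ite_eq' (Finset.range (n+1)) n, if_pos (Finset.mem_range.mpr (Nat.lt_succ_self n))]
      · rw [Finset.sum_congr rfl (fun j _ => by rw [smul_ite, smul_zero]),
          Finset.sum_ite_eq' (Finset.range (n+1)) 0, if_pos (Finset.mem_range.mpr (Nat.succ_pos n)),
          pow_zero, one_smul]
    have hkey' : ∑ j ∈ Finset.range (n+1), c ^ j •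
          (∑ s ∈ Finset.univ.filter (fun s : Finset (Fin n) => #s = j), y s)
        = ∑ j ∈ Finset.range (n+1), c ^ j • ((if j = n then φ (fun _ => e) else 0)
            + (if j = 0 then φ (fun _ => f) else 0)) := by
      rw [← hen, ← Finset.sum_congr rfl (fun j _ => this j), ← hgroup]
      exact key c
    calc ∑ j ∈ Finset.range (n+1), c ^ j • x j
        = (∑ j ∈ Finset.range (n+1), c ^ j •
            (∑ s ∈ Finset.univ.filter (fun s : Finset (Fin n) => #s = j), y s))
          - ∑ j ∈ Finset.range (n+1), c ^ j • ((if j = n then φ (fun _ => e) else 0)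
              + (if j = 0 then φ (fun _ => f) else 0)) := by
            rw [← Finset.sum_sub_distrib]
            refine Finset.sum_congr rfl fun j _ => ?_
            rw [hx]
            simp only [smul_sub, smul_add]
            abel
      _ = 0 := by rw [hkey', sub_self]
  -- conclude individual vanishing
  intro s hs hsu
  have hjn : #s < n := by
    rcases Nat.lt_or_ge #s n with h | h
    · exact h
    · exfalso
      apply hsu
      apply Finset.eq_univ_of_card
      have : #s ≤ n := by simpa using Finset.card_le_card (Finset.subset_univ s)
      have hcard : #s = n := le_antisymm this h
      simpa using hcard
  have hj0 : 0 < #s := Finset.card_pos.mpr hs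
  have hxj := hzero #s (Nat.lt_succ_of_lt hjn)
  rw [hx] at hxj
  dsimp only at hxj
  rw [if_neg hjn.ne, if_neg hj0.ne', sub_zero, sub_zero] at hxj
  -- all terms in the fiber are equal to `y s`
  have hsum : ∑ t ∈ Finset.univ.filter (fun t : Finset (Fin n) => #t = #s), y t
      = (Finset.univ.filter (fun t : Finset (Fin n) => #t = #s)).card • y s := by
    rw [← Finset.sum_const]
    refine Finset.sum_congr rfl fun t ht => ?_
    exact sym_piecewise φ hsym t s (Finset.mem_filter.mp ht).2 e f
  rw [hsum] at hxj
  have hcard : (Finset.univ.filter (fun t : Finset (Fin n) => #t = #s)).card ≠ 0 := by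
    refine Finset.card_ne_zero_of_mem (a := s) ?_
    exact Finset.mem_filter.mpr ⟨Finset.mem_univ s, rfl⟩
  have := hxj
  rw [← Nat.cast_smul_eq_nsmul ℂ] at this
  rcases smul_eq_zero.mp this with h | h
  · exact absurd (Nat.cast_eq_zero.mp h) hcard
  · exact h

include hsym hoa in
lemma idem_slot (hn : 0 < n) (e : M) (he : e * e = e) :
    φ (Function.update (fun _ => (1:M)) (⟨0, hn⟩ : Fin n) e) = φ (fun _ => e) := by
  classical
  set i₀ : Fin n := ⟨0, hn⟩
  set h : Fin n → M := fun i => if i = i₀ then 0 else (1 - e) with hh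
  have hdecomp : Function.update (fun _ => (1:M)) i₀ e = h + (fun _ => e) := by
    funext i
    by_cases hi : i = i₀
    · rw [hi, Function.update_self, Pi.add_apply, hh]
      simp
    · rw [Function.update_of_ne hi, Pi.add_apply, hh]
      simp [hi]
  rw [hdecomp, φ.map_add_univ h (fun _ => e)]
  rw [Finset.sum_eq_single_of_mem (∅ : Finset (Fin n)) (Finset.mem_univ _)]
  · rw [Finset.piecewise_empty]
  · intro s _ hs
    by_cases hi₀ : i₀ ∈ s
    · refine φ.map_coord_zero i₀ ?_
      rw [Finset.piecewise_eq_of_mem _ _ _ hi₀, hh]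
      simp
    · have hne : s.Nonempty := Finset.nonempty_of_ne_empty hs
      have harg : s.piecewise h (fun _ => e)
          = sᶜ.piecewise (fun _ => e) (fun _ => 1 - e) := by
        funext i
        by_cases hi : i ∈ s
        · rw [Finset.piecewise_eq_of_mem _ _ _ hi,
            Finset.piecewise_eq_of_notMem _ _ _ (by simpa using hi), hh]
          have : i ≠ i₀ := fun hii => hi₀ (hii ▸ hi)
          simp [this]
        · rw [Finset.piecewise_eq_of_notMem _ _ _ hi,
            Finset.piecewise_eq_of_mem _ _ _ (by simpa using hi)]
      rw [harg]
      refine cross_vanish φ hsym hoa hn e he sᶜ ⟨i₀, by simpa using hi₀⟩ ?_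
      intro hcu
      obtain ⟨a, ha⟩ := hne
      have : a ∈ sᶜ := hcu ▸ Finset.mem_univ a
      simp only [Finset.mem_compl] at this
      exact this ha

include hsym hoa in
lemma spec_identity (hn : 0 < n) {k : ℕ} (x : M) (e : Fin k → M) (lam : Fin k → ℂ)
    (hsum : ∑ i, e i = 1) (horth : ∀ i j, i ≠ j → e i * e j = 0)
    (hx : x = ∑ i, lam i • e i) :
    φ (fun _ => x) = φ (Function.update (fun _ => (1:M)) (⟨0, hn⟩ : Fin n) (x ^ n)) := by
  classical
  set i₀ : Fin n := ⟨0, hn⟩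
  have he : ∀ i, e i * e i = e i := by
    intro i
    have h2 : ∑ j, e i * e j = e i := by rw [← Finset.mul_sum, hsum, mul_one]
    have h3 : ∑ j, e i * e j = e i * e i :=
      Finset.sum_eq_single i (fun j _ hj => horth i j (Ne.symm hj)) (by simp)
    exact h3.symm.trans h2
  have hpow : ∀ p : ℕ, 0 < p → x ^ p = ∑ i, lam i ^ p • e i := by
    intro p hp
    induction p with
    | zero => exact absurd hp (lt_irrefl 0)
    | succ q ih =>
      rcases Nat.eq_zero_or_pos q with hq | hq
      · subst hq
        simpa using hx
      · rw [pow_succ, ih hq, hx, Finset.sum_mul_sum]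
        refine Finset.sum_congr rfl fun i _ => ?_
        rw [Finset.sum_eq_single i ?_ (by simp)]
        · rw [smul_mul_assoc, mul_smul_comm, he i, smul_smul, ← pow_succ]
        · intro j _ hj
          rw [smul_mul_assoc, mul_smul_comm, horth i j (Ne.symm hj), smul_zero, smul_zero]
  have hLHS : φ (fun _ => x) = ∑ i, lam i ^ n • φ (fun _ => e i) := by
    rw [hx]
    exact P_orth_sum φ hn hoa Finset.univ e lam (fun i _ j _ hij => horth i j hij)
  have hRHS : φ (Function.update (fun _ => (1:M)) i₀ (x ^ n))
      = ∑ i, lam i ^ n • φ (Function.update (fun _ => (1:M)) i₀ (e i)) := by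
    rw [hpow n hn]
    let L := φ.toLinearMap (fun _ => (1:M)) i₀
    have hL : ∀ z : M, φ (Function.update (fun _ => (1:M)) i₀ z) = L z := fun z => rfl
    rw [hL, map_sum]
    refine Finset.sum_congr rfl fun i _ => ?_
    rw [map_smul, hL]
  rw [hLHS, hRHS]
  refine Finset.sum_congr rfl fun i _ => ?_
  rw [idem_slot φ hsym hoa hn (e i) (he i)]

end alg2

section alg3
variable {n : ℕ} {M : Type*} [Ring M] [Algebra ℂ M]
  {X : Type*} [AddCommGroup X] [Module ℂ X]

lemma card_fiber_eq_choose (n j : ℕ) :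
    (Finset.univ.filter (fun s : Finset (Fin n) => #s = j)).card = n.choose j := by
  classical
  have : Finset.univ.filter (fun s : Finset (Fin n) => #s = j)
      = Finset.powersetCard j Finset.univ := by
    ext s
    simp [Finset.mem_powersetCard_univ]
  rw [this, Finset.card_powersetCard]
  simp

lemma singleton_piecewise (n : ℕ) (hn : 0 < n) (i : Fin n) (a : M) :
    ({i} : Finset (Fin n)).piecewise (fun _ => a) (fun _ => (1:M))
      = Function.update (fun _ => (1:M)) i a := by
  classical
  funext j
  by_cases hj : j = i
  · subst hj
    rw [Finset.piecewise_eq_of_mem _ _ _ (Finset.mem_singleton_self j), Function.update_self]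
  · rw [Finset.piecewise_eq_of_notMem _ _ _ (by simpa using hj), Function.update_of_ne hj]

/-- The "moreover" part: any representing linear map is given by `a ↦ φ(a,1,…,1)`. -/
lemma rep_eq_slot (hn : 0 < n)
    (φ : MultilinearMap ℂ (fun _ : Fin n => M) X)
    (hsym : ∀ (v : Fin n → M) (σ : Equiv.Perm (Fin n)), φ (fun i => v (σ i)) = φ v)
    (Φ : M →ₗ[ℂ] X) (hrep : ∀ a : M, Φ (a ^ n) = φ (fun _ => a)) (a : M) :
    Φ a = φ (Function.update (fun _ => (1:M)) (⟨0, hn⟩ : Fin n) a) := by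
  classical
  set i₀ : Fin n := ⟨0, hn⟩
  set u : ℕ → X := fun j => ∑ s ∈ Finset.univ.filter (fun s : Finset (Fin n) => #s = j),
    φ (s.piecewise (fun _ => a) (fun _ => (1:M))) with hu
  have key : ∀ t : ℂ, ∑ j ∈ Finset.range (n+1),
      t ^ j • (u j - Φ (a ^ j * ((n.choose j : ℕ) : M))) = 0 := by
    intro t
    have hLHS : φ (fun _ => t • a + 1) = ∑ j ∈ Finset.range (n+1), t ^ j • u j := by
      have h2 : φ (fun _ => t • a + 1)
          = ∑ s : Finset (Fin n), φ (s.piecewise (fun _ => t • a) (fun _ => (1:M))) :=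
        φ.map_add_univ (fun _ => t • a) (fun _ => (1:M))
      have h3 : ∀ s : Finset (Fin n),
          φ (s.piecewise (fun _ => t • a) (fun _ => (1:M)))
            = t ^ #s • φ (s.piecewise (fun _ => a) (fun _ => (1:M))) := by
        intro s
        have harg : s.piecewise (fun _ => t • a) (fun _ => (1:M))
            = s.piecewise (fun i => t • (s.piecewise (fun _ => a) (fun _ => (1:M))) i)
                (s.piecewise (fun _ => a) (fun _ => (1:M))) := by
          funext i
          by_cases hi : i ∈ s
          · rw [Finset.piecewise_eq_of_mem _ _ _ hi, Finset.piecewise_eq_of_mem _ _ _ hi,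
              Finset.piecewise_eq_of_mem _ _ _ hi]
          · rw [Finset.piecewise_eq_of_notMem _ _ _ hi,
              Finset.piecewise_eq_of_notMem _ _ _ hi,
              Finset.piecewise_eq_of_notMem _ _ _ hi]
        rw [harg, φ.map_piecewise_smul (fun _ => t) _ s, Finset.prod_const]
      have h4 : ∑ s : Finset (Fin n), φ (s.piecewise (fun _ => t • a) (fun _ => (1:M)))
          = ∑ j ∈ Finset.range (n+1), ∑ s ∈ Finset.univ.filter
              (fun s : Finset (Fin n) => #s = j),
              t ^ #s • φ (s.piecewise (fun _ => a) (fun _ => (1:M))) := by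
        rw [Finset.sum_congr rfl (fun s _ => h3 s)]
        refine (Finset.sum_fiberwise_of_maps_to ?_ _).symm
        intro s _
        have h1 : #s ≤ n := by
          simpa using Finset.card_le_card (Finset.subset_univ s)
        exact Finset.mem_range.mpr (Nat.lt_succ_of_le h1)
      rw [h2, h4]
      refine Finset.sum_congr rfl fun j _ => ?_
      rw [hu, Finset.smul_sum]
      refine Finset.sum_congr rfl fun s hs => ?_
      rw [(Finset.mem_filter.mp hs).2]
    have hRHS : φ (fun _ => t • a + 1)
        = ∑ j ∈ Finset.range (n+1), t ^ j • Φ (a ^ j * ((n.choose j : ℕ) : M)) := by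
      rw [← hrep (t • a + 1)]
      have hbin : (t • a + 1) ^ n
          = ∑ j ∈ Finset.range (n+1), t ^ j • (a ^ j * ((n.choose j : ℕ) : M)) := by
        rw [Commute.add_pow (Commute.one_right (t • a))]
        refine Finset.sum_congr rfl fun j _ => ?_
        rw [one_pow, mul_one, _root_.smul_pow, smul_mul_assoc]
      rw [hbin, map_sum]
      refine Finset.sum_congr rfl fun j _ => ?_
      rw [map_smul]
    calc ∑ j ∈ Finset.range (n+1), t ^ j • (u j - Φ (a ^ j * ((n.choose j : ℕ) : M)))
        = (∑ j ∈ Finset.range (n+1), t ^ j • u j)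
          - ∑ j ∈ Finset.range (n+1), t ^ j • Φ (a ^ j * ((n.choose j : ℕ) : M)) := by
          rw [← Finset.sum_sub_distrib]
          exact Finset.sum_congr rfl fun j _ => smul_sub _ _ _
      _ = 0 := by rw [← hLHS, ← hRHS, sub_self]
  have h1 := coeffs_eq_zero (n+1) _ Set.univ Set.infinite_univ (fun t _ => key t) 1
    (by omega)
  -- compute u 1
  have hu1 : u 1 = n • φ (Function.update (fun _ => (1:M)) i₀ a) := by
    show ∑ s ∈ Finset.univ.filter (fun s : Finset (Fin n) => #s = 1),
      φ (s.piecewise (fun _ => a) (fun _ => (1:M))) = _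
    have : ∀ s ∈ Finset.univ.filter (fun s : Finset (Fin n) => #s = 1),
        φ (s.piecewise (fun _ => a) (fun _ => (1:M)))
          = φ (Function.update (fun _ => (1:M)) i₀ a) := by
      intro s hs
      rw [← singleton_piecewise n hn i₀ a]
      exact sym_piecewise φ hsym s {i₀} (by simpa using (Finset.mem_filter.mp hs).2) a 1
    rw [Finset.sum_congr rfl this, Finset.sum_const, card_fiber_eq_choose n 1,
      Nat.choose_one_right]
  have hΦ1 : Φ (a ^ 1 * ((n.choose 1 : ℕ) : M)) = n • Φ a := by
    rw [pow_one, Nat.choose_one_right]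
    have : a * ((n : ℕ) : M) = n • a := by
      rw [(Nat.cast_commute (n : ℕ) a).eq.symm, nsmul_eq_mul]
    rw [this, map_nsmul]
  rw [hu1, hΦ1] at h1
  have h2 : (n : ℂ) • (φ (Function.update (fun _ => (1:M)) i₀ a) - Φ a) = 0 := by
    rw [smul_sub, Nat.cast_smul_eq_nsmul, Nat.cast_smul_eq_nsmul, ← h1]
  rcases smul_eq_zero.mp h2 with h | h
  · exact absurd (Nat.cast_eq_zero.mp h) hn.ne'
  · rw [← sub_eq_zero]
    rw [sub_eq_zero] at h ⊢
    exact h.symm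
end alg3

section symmetrize
variable {n : ℕ} {M : Type*} [Ring M] [Algebra ℂ M]
  {X : Type*} [AddCommGroup X] [Module ℂ X]

noncomputable def symmetrizeM (φ : MultilinearMap ℂ (fun _ : Fin n => M) X) :
    MultilinearMap ℂ (fun _ : Fin n => M) X :=
  (((n.factorial : ℂ))⁻¹) • ∑ σ : Equiv.Perm (Fin n), φ.domDomCongr σ

lemma symmetrizeM_apply (φ : MultilinearMap ℂ (fun _ : Fin n => M) X) (v : Fin n → M) :
    symmetrizeM φ v = ((n.factorial : ℂ))⁻¹ • ∑ σ : Equiv.Perm (Fin n), φ (fun i => v (σ i)) := by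
  rw [symmetrizeM, MultilinearMap.smul_apply, MultilinearMap.sum_apply]
  rfl

lemma symmetrizeM_symm (φ : MultilinearMap ℂ (fun _ : Fin n => M) X)
    (v : Fin n → M) (τ : Equiv.Perm (Fin n)) :
    symmetrizeM φ (fun i => v (τ i)) = symmetrizeM φ v := by
  rw [symmetrizeM_apply, symmetrizeM_apply]
  congr 1
  have := Equiv.sum_comp (Equiv.mulLeft τ) (fun ρ : Equiv.Perm (Fin n) => φ (fun i => v (ρ i)))
  rw [← this]
  exact Finset.sum_congr rfl fun σ _ => rfl

lemma symmetrizeM_diag (φ : MultilinearMap ℂ (fun _ : Fin n => M) X) (a : M) :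
    symmetrizeM φ (fun _ => a) = φ (fun _ => a) := by
  rw [symmetrizeM_apply]
  rw [Finset.sum_congr rfl (fun σ _ => rfl : ∀ σ ∈ Finset.univ,
    φ (fun i => (fun _ => a) (σ i)) = φ (fun _ => a))]
  rw [Finset.sum_const, Finset.card_univ, Fintype.card_perm, Fintype.card_fin,
    ← Nat.cast_smul_eq_nsmul ℂ, smul_smul,
    inv_mul_cancel₀ (Nat.cast_ne_zero.mpr (Nat.factorial_ne_zero n)), one_smul]
end symmetrize

section matrixpart
open MvPolynomial in
noncomputable def Delta (k : ℕ) : MvPolynomial (Fin k) ℂ :=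
  ∏ p ∈ Finset.univ.offDiag, (MvPolynomial.X p.1 - MvPolynomial.X p.2)

open MvPolynomial in
lemma Delta_symm (k : ℕ) : (Delta k).IsSymmetric := by
  intro σ
  rw [Delta, map_prod]
  have h1 : ∀ p ∈ Finset.univ.offDiag, (rename σ) (X p.1 - X p.2)
      = (X (σ p.1) - X (σ p.2) : MvPolynomial (Fin k) ℂ) := by
    intro p _
    rw [map_sub, rename_X, rename_X]
  rw [Finset.prod_congr rfl h1]
  refine Finset.prod_equiv (Equiv.prodCongr σ σ) ?_ ?_
  · intro p
    simp only [Finset.mem_offDiag, Finset.mem_univ, true_and, Equiv.prodCongr_apply,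
      Prod.map_fst, Prod.map_snd]
    exact ⟨fun h => fun he => h (σ.injective he), fun h he => h (congrArg σ he)⟩
  · intro p _
    rfl

open MvPolynomial in
lemma exists_symm_rep (k : ℕ) : ∃ q : MvPolynomial (Fin k) ℂ,
    Delta k = MvPolynomial.aeval
      (fun i : Fin k => MvPolynomial.esymm (Fin k) ℂ ((i : ℕ) + 1)) q := by
  obtain ⟨q, hq⟩ := MvPolynomial.esymmAlgHom_surjective (σ := Fin k) (R := ℂ) (n := k)
      (by simp) ⟨Delta k, (MvPolynomial.mem_symmetricSubalgebra _).mpr (Delta_symm k)⟩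
  refine ⟨q, ?_⟩
  have h1 := congrArg Subtype.val hq
  rw [MvPolynomial.esymmAlgHom_apply] at h1
  exact h1.symm

open MvPolynomial in
lemma aeval_Delta (k : ℕ) (r : Fin k → ℂ) :
    MvPolynomial.aeval r (Delta k) = ∏ p ∈ Finset.univ.offDiag, (r p.1 - r p.2) := by
  rw [Delta, map_prod]
  exact Finset.prod_congr rfl fun p _ => by rw [map_sub, MvPolynomial.aeval_X, MvPolynomial.aeval_X]

lemma aeval_Delta_ne_zero_inj {k : ℕ} {r : Fin k → ℂ}
    (h : MvPolynomial.aeval r (Delta k) ≠ 0) : Function.Injective r := by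
  intro i j hij
  by_contra hne
  apply h
  rw [aeval_Delta]
  have hmem : (i, j) ∈ (Finset.univ.offDiag : Finset (Fin k × Fin k)) :=
    Finset.mem_offDiag.mpr ⟨Finset.mem_univ _, Finset.mem_univ _, hne⟩
  refine Finset.prod_eq_zero hmem ?_
  rw [hij, sub_self]

lemma inj_aeval_Delta_ne_zero {k : ℕ} {r : Fin k → ℂ} (h : Function.Injective r) :
    MvPolynomial.aeval r (Delta k) ≠ 0 := by
  rw [aeval_Delta]
  refine Finset.prod_ne_zero_iff.mpr fun p hp => ?_
  have := (Finset.mem_offDiag.mp hp).2.2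
  exact sub_ne_zero.mpr (fun he => this (h he))

lemma multiset_enum {α : Type*} (s : Multiset α) (k : ℕ) (h : Multiset.card s = k) :
    ∃ r : Fin k → α, s = Multiset.map r Finset.univ.val := by
  obtain ⟨L, rfl⟩ := Quotient.exists_rep s
  have hlen : L.length = k := by simpa using h
  subst hlen
  refine ⟨L.get, ?_⟩
  have h1 : (Finset.univ.val : Multiset (Fin L.length)) = ↑(List.finRange L.length) := rfl
  rw [h1]
  have h2 : Multiset.map L.get ↑(List.finRange L.length)
      = ((List.finRange L.length).map L.get : List α) := rfl
  rw [h2, ← List.ofFn_eq_map, List.ofFn_get]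
  rfl

open Polynomial in
lemma coeff_charpoly_esymm {k : ℕ} (x : Matrix (Fin k) (Fin k) ℂ) (r : Fin k → ℂ)
    (hcp : x.charpoly = ∏ i, (X - C (r i))) (j : ℕ) (hj : j ≤ k) :
    (-1:ℂ)^j * x.charpoly.coeff (k - j) = (Finset.univ.val.map r).esymm j := by
  have hs : Multiset.card (Finset.univ.val.map r) = k := by simp
  have h1 : x.charpoly = ((Finset.univ.val.map r).map (fun t => X - C t)).prod := by
    rw [hcp, Multiset.map_map]
    rfl
  rw [h1, Multiset.prod_X_sub_C_coeff _ (by rw [hs]; exact Nat.sub_le k j), hs,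
    Nat.sub_sub_self hj, ← mul_assoc, ← pow_add, Even.neg_one_pow ⟨j, rfl⟩, one_mul]

open Polynomial in
lemma eval_delta_via_coeffs {k : ℕ} (q : MvPolynomial (Fin k) ℂ)
    (hq : Delta k = MvPolynomial.aeval
      (fun i : Fin k => MvPolynomial.esymm (Fin k) ℂ ((i : ℕ) + 1)) q)
    (x : Matrix (Fin k) (Fin k) ℂ) (r : Fin k → ℂ)
    (hcp : x.charpoly = ∏ i, (X - C (r i))) :
    MvPolynomial.aeval
      (fun i : Fin k => (-1:ℂ)^((i:ℕ)+1) * x.charpoly.coeff (k - ((i:ℕ)+1))) q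
      = MvPolynomial.aeval r (Delta k) := by
  conv_rhs => rw [hq]
  have hcomp := MvPolynomial.comp_aeval
    (f := fun i : Fin k => MvPolynomial.esymm (Fin k) ℂ ((i : ℕ) + 1))
    (φ := (MvPolynomial.aeval r : MvPolynomial (Fin k) ℂ →ₐ[ℂ] ℂ))
  have h2 : (MvPolynomial.aeval r) ((MvPolynomial.aeval
      (fun i : Fin k => MvPolynomial.esymm (Fin k) ℂ ((i : ℕ) + 1))) q)
      = MvPolynomial.aeval
        (fun i : Fin k => MvPolynomial.aeval r (MvPolynomial.esymm (Fin k) ℂ ((i : ℕ) + 1))) q := by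
    rw [← hcomp]
    rfl
  have h3 : (fun i : Fin k => MvPolynomial.aeval r (MvPolynomial.esymm (Fin k) ℂ ((i:ℕ)+1)))
      = fun i : Fin k => (-1:ℂ)^((i:ℕ)+1) * x.charpoly.coeff (k - ((i:ℕ)+1)) := by
    funext i
    rw [MvPolynomial.aeval_esymm_eq_multiset_esymm,
      ← coeff_charpoly_esymm x r hcp ((i : ℕ) + 1) i.isLt]
  rw [h2, h3]

end matrixpart

open Polynomial in
lemma line_good {k : ℕ} (hk : 0 < k) (A : Matrix (Fin k) (Fin k) ℂ) :
    ∃ m : Matrix (Fin k) (Fin k) ℂ, Set.Finite {c : ℂ |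
      ¬ ∃ r : Fin k → ℂ, Function.Injective r ∧
        (A + c • m).charpoly = ∏ i, (X - C (r i))} := by
  classical
  set d : Fin k → ℂ := fun i => ((i : ℕ) : ℂ) with hd_def
  have hd : Function.Injective d := by
    intro i j h
    exact Fin.ext (Nat.cast_injective h)
  set m := Matrix.diagonal d - A with hm
  set B : Matrix (Fin k) (Fin k) (Polynomial ℂ) :=
    A.map Polynomial.C + (Polynomial.X : ℂ[X]) • m.map Polynomial.C with hB_def
  have hB : ∀ c : ℂ, B.map (fun p => p.eval c) = A + c • m := by
    intro c
    ext i j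
    simp only [hB_def, Matrix.map_apply, Matrix.add_apply, Matrix.smul_apply, smul_eq_mul,
      eval_add, eval_mul, eval_X, eval_C]
  have hcp : ∀ c : ℂ, (A + c • m).charpoly = B.charpoly.map (Polynomial.evalRingHom c) := by
    intro c
    rw [← Matrix.charpoly_map]
    congr 1
    rw [← hB c]
    rfl
  obtain ⟨q, hq⟩ := exists_symm_rep k
  set D : Polynomial ℂ := MvPolynomial.aeval
    (fun i : Fin k => (-1 : Polynomial ℂ)^((i:ℕ)+1) * B.charpoly.coeff (k - ((i:ℕ)+1))) q
    with hD_def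
  have hevalD : ∀ c : ℂ, D.eval c = MvPolynomial.aeval
      (fun i : Fin k => (-1:ℂ)^((i:ℕ)+1) * (A + c • m).charpoly.coeff (k - ((i:ℕ)+1))) q := by
    intro c
    have hcomp := MvPolynomial.comp_aeval
      (f := fun i : Fin k => (-1 : Polynomial ℂ)^((i:ℕ)+1) * B.charpoly.coeff (k - ((i:ℕ)+1)))
      (φ := (Polynomial.aeval c : Polynomial ℂ →ₐ[ℂ] ℂ))
    have h1 : D.eval c = (Polynomial.aeval c : Polynomial ℂ →ₐ[ℂ] ℂ) D := by
      rw [Polynomial.aeval_def]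
      rw [← Polynomial.eval_map]
      congr 1
      have : (algebraMap ℂ ℂ) = RingHom.id ℂ := rfl
      rw [this, Polynomial.map_id]
    rw [h1, hD_def]
    have h2 := congrFun (congrArg DFunLike.coe hcomp) q
    simp only [AlgHom.coe_comp, Function.comp_apply] at h2
    rw [h2]
    have h4 : (fun i : Fin k => (Polynomial.aeval c : Polynomial ℂ →ₐ[ℂ] ℂ)
        ((-1 : Polynomial ℂ)^((i:ℕ)+1) * B.charpoly.coeff (k - ((i:ℕ)+1))))
        = fun i : Fin k => (-1:ℂ)^((i:ℕ)+1) * (A + c • m).charpoly.coeff (k - ((i:ℕ)+1)) := by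
      funext i
      rw [map_mul, map_pow, map_neg, map_one]
      congr 1
      rw [hcp c, Polynomial.coeff_map]
      have h5 : (Polynomial.aeval c : Polynomial ℂ →ₐ[ℂ] ℂ) (B.charpoly.coeff (k - ((i:ℕ)+1)))
          = Polynomial.eval c (B.charpoly.coeff (k - ((i:ℕ)+1))) := by
        rw [Polynomial.aeval_def, ← Polynomial.eval_map]
        congr 1
        have h3 : (algebraMap ℂ ℂ) = RingHom.id ℂ := rfl
        rw [h3, Polynomial.map_id]
      rw [h5]
      rfl
    rw [h4]
  have hA1 : A + (1:ℂ) • m = Matrix.diagonal d := by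
    rw [one_smul, hm]
    abel
  have hDiagcp : (Matrix.diagonal d).charpoly = ∏ i, (X - C (d i)) := by
    rw [Matrix.charpoly_of_upperTriangular _ ?_]
    · exact Finset.prod_congr rfl fun i _ => by rw [Matrix.diagonal_apply_eq]
    · intro i j hji
      exact Matrix.diagonal_apply_ne d (Ne.symm (ne_of_lt hji))
  have hD1 : D.eval 1 ≠ 0 := by
    rw [hevalD 1]
    simp only [hA1]
    rw [eval_delta_via_coeffs q hq (Matrix.diagonal d) d hDiagcp]
    exact inj_aeval_Delta_ne_zero hd
  have hDne : D ≠ 0 := fun h => hD1 (by rw [h, eval_zero])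
  refine ⟨m, (Polynomial.finite_setOf_isRoot hDne).subset ?_⟩
  intro c hc
  simp only [Set.mem_setOf_eq] at hc ⊢
  by_contra hroot
  apply hc
  have hmonic : (A + c • m).charpoly.Monic := Matrix.charpoly_monic _
  have hdeg : (A + c • m).charpoly.natDegree = k := by
    simpa using Matrix.charpoly_natDegree_eq_dim (A + c • m)
  have hsplits : Splits (A + c • m).charpoly := IsAlgClosed.splits _
  have hcardroots : Multiset.card (A + c • m).charpoly.roots = k := by
    exact (Polynomial.splits_iff_card_roots.mp hsplits).trans hdeg
  obtain ⟨r, hr⟩ := multiset_enum ((A + c • m).charpoly.roots) k hcardroots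
  have hcp' : (A + c • m).charpoly = ∏ i, (X - C (r i)) := by
    conv_lhs => rw [hsplits.eq_prod_roots_of_monic hmonic]
    rw [hr, Multiset.map_map]
    rfl
  refine ⟨r, ?_, hcp'⟩
  apply aeval_Delta_ne_zero_inj
  rw [← eval_delta_via_coeffs q hq (A + c • m) r hcp', ← hevalD c]
  exact hroot

open Polynomial in
lemma lagrange_spec {A : Type*} [Ring A] [Algebra ℂ A] {k : ℕ} (hk : 0 < k)
    (x : A) (r : Fin k → ℂ) (hinj : Function.Injective r)
    (hx : Polynomial.aeval x (∏ i, (X - C (r i))) = 0) :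
    ∃ e : Fin k → A, (∑ i, e i = 1) ∧ (∀ i j, i ≠ j → e i * e j = 0)
      ∧ x = ∑ i, r i • e i := by
  classical
  set p : Fin k → Polynomial ℂ := fun i => Lagrange.basis Finset.univ r i with hp
  set e : Fin k → A := fun i => Polynomial.aeval x (p i) with he
  have hdvd1 : ∀ i, (∏ l ∈ Finset.univ.erase i, (X - C (r l))) ∣ p i := by
    intro i
    have hbd : p i = ∏ j ∈ Finset.univ.erase i, (C (r i - r j)⁻¹ * (X - C (r j))) := rfl
    rw [hbd, Finset.prod_mul_distrib]
    exact Dvd.intro_left _ rfl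
  have hdvd2 : ∀ i j, i ≠ j → (X - C (r i)) ∣ p j := by
    intro i j hij
    refine dvd_trans ?_ (Finset.dvd_prod_of_mem _
      (Finset.mem_erase.mpr ⟨hij, Finset.mem_univ i⟩))
    exact dvd_mul_left _ _
  have hfull : ∀ i, (∏ l, (X - C (r l)))
      = (X - C (r i)) * ∏ l ∈ Finset.univ.erase i, (X - C (r l)) :=
    fun i => (Finset.mul_prod_erase Finset.univ _ (Finset.mem_univ i)).symm
  have haeval_full : ∀ w : Polynomial ℂ, (∏ l, (X - C (r l))) ∣ w →
      Polynomial.aeval x w = 0 := by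
    rintro w ⟨w', rfl⟩
    rw [map_mul, hx, zero_mul]
  have horth : ∀ i j, i ≠ j → e i * e j = 0 := by
    intro i j hij
    rw [he]
    dsimp only
    rw [← map_mul]
    apply haeval_full
    rw [hfull j]
    exact mul_dvd_mul (hdvd2 j i (Ne.symm hij)) (hdvd1 j)
  have hsum1 : ∑ i, p i = 1 :=
    Lagrange.sum_basis (Set.injOn_of_injective hinj) ⟨⟨0, hk⟩, Finset.mem_univ _⟩
  have hsum : ∑ i, e i = 1 := by
    rw [he]
    dsimp only
    rw [← map_sum, hsum1, map_one]
  have hxe : ∀ i, x * e i = r i • e i := by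
    intro i
    have h0 : (x - algebraMap ℂ A (r i)) * e i = 0 := by
      have h1 : (x - algebraMap ℂ A (r i)) * e i
          = Polynomial.aeval x ((X - C (r i)) * p i) := by
        rw [map_mul, map_sub, Polynomial.aeval_X, Polynomial.aeval_C]
      rw [h1]
      apply haeval_full
      rw [hfull i]
      exact mul_dvd_mul_left _ (hdvd1 i)
    rw [sub_mul, sub_eq_zero] at h0
    rw [h0, ← Algebra.smul_def]
  refine ⟨e, hsum, horth, ?_⟩
  calc x = x * 1 := (mul_one x).symm
    _ = x * ∑ i, e i := by rw [hsum]
    _ = ∑ i, x * e i := Finset.mul_sum _ _ _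
    _ = ∑ i, r i • e i := Finset.sum_congr rfl fun i _ => hxe i

section assembly
variable {X : Type*} [AddCommGroup X] [Module ℂ X]

lemma isPF_matrix {k : ℕ} (Ψ : Matrix (Fin k) (Fin k) ℂ →ₗ[ℂ] X)
    (Q : Matrix (Fin k) (Fin k) (Polynomial ℂ)) :
    IsPF (fun c => Ψ (Q.map (fun p => p.eval c))) := by
  have h1 : (fun c => Ψ (Q.map (fun p => p.eval c)))
      = fun c => ∑ i, ∑ j, ((Q i j).eval c) • Ψ (Matrix.single i j 1) := by
    funext c
    rw [Matrix.matrix_eq_sum_single (Q.map (fun p => p.eval c)), map_sum]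
    refine Finset.sum_congr rfl fun i _ => ?_
    rw [map_sum]
    refine Finset.sum_congr rfl fun j _ => ?_
    rw [Matrix.map_apply, ← map_smul]
    congr 1
    rw [Matrix.smul_single, smul_eq_mul, mul_one]
  rw [h1]
  exact isPF_sum _ _ (fun i _ => isPF_sum _ _ (fun j _ => isPF_eval_smul _ _))

variable {n : ℕ} {M : Type*} [Ring M] [Algebra ℂ M]
  (φ : MultilinearMap ℂ (fun _ : Fin n => M) X)

lemma phi_piecewise_smul (s : Finset (Fin n)) (c : ℂ) (u v : M) :
    φ (s.piecewise (fun _ => c • u) (fun _ => v))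
      = c ^ #s • φ (s.piecewise (fun _ => u) (fun _ => v)) := by
  classical
  have harg : s.piecewise (fun _ => c • u) (fun _ => v)
      = s.piecewise (fun i => c • (s.piecewise (fun _ => u) (fun _ => v)) i)
          (s.piecewise (fun _ => u) (fun _ => v)) := by
    funext i
    by_cases hi : i ∈ s
    · rw [Finset.piecewise_eq_of_mem _ _ _ hi, Finset.piecewise_eq_of_mem _ _ _ hi,
        Finset.piecewise_eq_of_mem _ _ _ hi]
    · rw [Finset.piecewise_eq_of_notMem _ _ _ hi, Finset.piecewise_eq_of_notMem _ _ _ hi,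
        Finset.piecewise_eq_of_notMem _ _ _ hi]
  rw [harg, φ.map_piecewise_smul (fun _ => c) _ s, Finset.prod_const]

lemma isPF_phi_line (a m' : M) : IsPF (fun c : ℂ => φ (fun _ => a + c • m')) := by
  classical
  have h1 : (fun c : ℂ => φ (fun _ => a + c • m'))
      = fun c : ℂ => ∑ s : Finset (Fin n),
          c ^ #s • φ (s.piecewise (fun _ => m') (fun _ => a)) := by
    funext c
    have h0 : (fun _ : Fin n => a + c • m')
        = (fun _ : Fin n => c • m') + (fun _ : Fin n => a) := by
      funext i
      exact add_comm _ _
    rw [h0, φ.map_add_univ]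
    exact Finset.sum_congr rfl fun s _ => phi_piecewise_smul φ s c m' a
  rw [h1]
  exact isPF_sum _ _ (fun s _ => isPF_monomial _ _)

open Polynomial in
lemma main_identity {k : ℕ} (g : M ≃ₐ[ℂ] Matrix (Fin k) (Fin k) ℂ) (hn : 0 < n)
    (hsym : ∀ (v : Fin n → M) (σ : Equiv.Perm (Fin n)), φ (fun i => v (σ i)) = φ v)
    (hoa : ∀ a b : M, a * b = 0 → b * a = 0 →
      φ (fun _ => a + b) = φ (fun _ => a) + φ (fun _ => b))
    (a : M) :
    φ (fun _ => a) = φ (Function.update (fun _ => (1:M)) (⟨0, hn⟩ : Fin n) (a ^ n)) := by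
  classical
  rcases Nat.eq_zero_or_pos k with hk | hk
  · subst hk
    haveI : Subsingleton (Matrix (Fin 0) (Fin 0) ℂ) := ⟨fun x y => by ext i j; exact i.elim0⟩
    haveI : Subsingleton M := g.toEquiv.subsingleton
    exact spec_identity φ hsym hoa hn a Fin.elim0 Fin.elim0 (Subsingleton.elim _ _)
      (fun i => i.elim0) (Subsingleton.elim _ _)
  · obtain ⟨m, hfin⟩ := line_good hk (g a)
    set m' : M := g.symm m with hm'
    set L : M →ₗ[ℂ] X := φ.toLinearMap (fun _ => (1:M)) (⟨0, hn⟩ : Fin n) with hL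
    have hLdef : ∀ z : M, φ (Function.update (fun _ => (1:M)) (⟨0, hn⟩ : Fin n) z) = L z :=
      fun z => rfl
    set B : Matrix (Fin k) (Fin k) (Polynomial ℂ) :=
      (g a).map Polynomial.C + (Polynomial.X : ℂ[X]) • m.map Polynomial.C with hB_def
    have hB : ∀ c : ℂ, B.map (fun p => p.eval c) = g a + c • m := by
      intro c
      ext i j
      simp only [hB_def, Matrix.map_apply, Matrix.add_apply, Matrix.smul_apply, smul_eq_mul,
        eval_add, eval_mul, eval_X, eval_C]
    set F : ℂ → X := fun c => φ (fun _ => a + c • m') - L ((a + c • m')^n) with hF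
    have hgsymm : ∀ c : ℂ, a + c • m' = g.symm (g a + c • m) := by
      intro c
      rw [map_add, AlgEquiv.symm_apply_apply, map_smul]
    have hgood : ∀ c : ℂ, (∃ r : Fin k → ℂ, Function.Injective r ∧
        (g a + c • m).charpoly = ∏ i, (Polynomial.X - Polynomial.C (r i))) → F c = 0 := by
      rintro c ⟨r, hrinj, hrcp⟩
      have hxmat : Polynomial.aeval (g a + c • m) (∏ i, (Polynomial.X - Polynomial.C (r i))) = 0 := by
        rw [← hrcp]
        exact Matrix.aeval_self_charpoly _
      obtain ⟨e, hsum, horth, hxe⟩ := lagrange_spec hk (g a + c • m) r hrinj hxmat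
      set e' : Fin k → M := fun i => g.symm (e i) with he'
      have h1 : ∑ i, e' i = 1 := by
        rw [he']
        dsimp only
        rw [← map_sum, hsum, map_one]
      have h2 : ∀ i j, i ≠ j → e' i * e' j = 0 := fun i j hij => by
        rw [he']
        dsimp only
        rw [← map_mul, horth i j hij, map_zero]
      have h3 : a + c • m' = ∑ i, r i • e' i := by
        rw [hgsymm c]
        conv_lhs => rw [hxe]
        rw [map_sum]
        exact Finset.sum_congr rfl fun i _ => by rw [map_smul]
      have hid := spec_identity φ hsym hoa hn (a + c • m') e' r h1 h2 h3
      rw [hF]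
      dsimp only
      rw [hid, hLdef]
      exact sub_self _
    have hPF : IsPF F := by
      rw [hF]
      apply isPF_sub
      · exact isPF_phi_line φ a m'
      · have key : ∀ c : ℂ, L ((a + c • m')^n)
            = (L.comp g.symm.toLinearMap) ((B^n).map (fun p => p.eval c)) := by
          intro c
          have h5 : (B^n).map (fun p => p.eval c) = (g a + c • m)^n := by
            have h6 := map_pow (RingHom.mapMatrix (Polynomial.evalRingHom c)) B n
            simp only [RingHom.mapMatrix_apply] at h6
            rw [← hB c]
            exact h6
          rw [h5]
          have h7 : (a + c • m')^n = g.symm ((g a + c • m)^n) := by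
            rw [map_pow, ← hgsymm c]
          rw [h7]
          rfl
        rw [show (fun c : ℂ => L ((a + c • m')^n))
            = fun c : ℂ => (L.comp g.symm.toLinearMap) ((B^n).map (fun p => p.eval c))
          from funext key]
        exact isPF_matrix _ _
    have hinf : Set.Infinite {c : ℂ | ∃ r : Fin k → ℂ, Function.Injective r ∧
        (g a + c • m).charpoly = ∏ i, (Polynomial.X - Polynomial.C (r i))} := by
      have := hfin.infinite_compl
      have hcompl : {c : ℂ | ¬ ∃ r : Fin k → ℂ, Function.Injective r ∧
          (g a + c • m).charpoly = ∏ i, (Polynomial.X - Polynomial.C (r i))}ᶜ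
          = {c : ℂ | ∃ r : Fin k → ℂ, Function.Injective r ∧
          (g a + c • m).charpoly = ∏ i, (Polynomial.X - Polynomial.C (r i))} := by
        ext c
        simp [Set.mem_compl_iff]
      rwa [hcompl] at this
    have hvanish := isPF_vanish hPF _ hinf (fun c hc => hgood c hc)
    have hF0 := hvanish 0
    rw [hF] at hF0
    dsimp only at hF0
    rw [zero_smul, add_zero, sub_eq_zero] at hF0
    rw [hF0, hLdef]
end assembly

/- Statement 0: Let `𝓜` be a complex algebra isomorphic to a full matrix algebra `M_k(ℂ)`,
`X` a complex linear space, and `P : 𝓜 → X` an orthogonally additive n-homogeneous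
polynomial. Then there is a unique linear map `Φ : 𝓜 → X` with `P(a) = Φ(aⁿ)`; moreover if
`φ` is the symmetric n-linear map associated with `P` and `e` is the identity of `𝓜`, then
`Φ(a) = φ(a, e, …, e)`. -/

theorem statement0 (n : ℕ) (hn : 2 ≤ n)
    (M : Type*) [Ring M] [Algebra ℂ M]
    (hM : ∃ k : ℕ, Nonempty (M ≃ₐ[ℂ] Matrix (Fin k) (Fin k) ℂ))
    (X : Type*) [AddCommGroup X] [Module ℂ X]
    (P : M → X)
    -- `P` is an n-homogeneous polynomial:
    (hP : ∃ φ : MultilinearMap ℂ (fun _ : Fin n => M) X, ∀ a : M, P a = φ fun _ => a)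
    -- `P` is orthogonally additive:
    (hoa : ∀ a b : M, a * b = 0 → b * a = 0 → P (a + b) = P a + P b) :
    (∃! Φ : M →ₗ[ℂ] X, ∀ a : M, P a = Φ (a ^ n)) ∧
    -- moreover, if `φ` is the symmetric n-linear map associated with `P`, then any
    -- representing `Φ` is given by `Φ(a) = φ(a, e, …, e)` where `e = 1`:
    (∀ φ : MultilinearMap ℂ (fun _ : Fin n => M) X,
      (∀ (v : Fin n → M) (σ : Equiv.Perm (Fin n)), φ (fun i => v (σ i)) = φ v) →
      (∀ a : M, P a = φ fun _ => a) →
      ∀ Φ : M →ₗ[ℂ] X, (∀ a : M, P a = Φ (a ^ n)) →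
        ∀ a : M, Φ a = φ (fun i => if (i : ℕ) = 0 then a else 1)) := by
    classical
  have hn0 : 0 < n := lt_of_lt_of_le two_pos hn
  set i₀ : Fin n := ⟨0, hn0⟩ with hi₀
  -- conversion between the two descriptions of the slot function
  have hslot : ∀ (φ : MultilinearMap ℂ (fun _ : Fin n => M) X) (a : M),
      φ (Function.update (fun _ => (1:M)) i₀ a)
        = φ (fun i => if (i : ℕ) = 0 then a else 1) := by
    intro φ a
    congr 1
    funext i
    by_cases hi : (i : ℕ) = 0
    · rw [if_pos hi, show i = i₀ from Fin.ext hi, Function.update_self]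
    · have : i ≠ i₀ := fun h => hi (by rw [h])
      rw [Function.update_of_ne this, if_neg hi]
  obtain ⟨k, ⟨g⟩⟩ := hM
  obtain ⟨φ₀, hφ₀⟩ := hP
  set φs := symmetrizeM φ₀ with hφs
  have hsym : ∀ (v : Fin n → M) (σ : Equiv.Perm (Fin n)), φs (fun i => v (σ i)) = φs v :=
    fun v σ => symmetrizeM_symm φ₀ v σ
  have hrep : ∀ a : M, P a = φs (fun _ => a) := by
    intro a
    rw [hφs, symmetrizeM_diag, ← hφ₀ a]
  have hoa' : ∀ a b : M, a * b = 0 → b * a = 0 →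
      φs (fun _ => a + b) = φs (fun _ => a) + φs (fun _ => b) := by
    intro a b h1 h2
    rw [← hrep, ← hrep, ← hrep]
    exact hoa a b h1 h2
  set Φ₀ : M →ₗ[ℂ] X := φs.toLinearMap (fun _ => (1:M)) i₀ with hΦ₀
  have hΦ₀def : ∀ z : M, Φ₀ z = φs (Function.update (fun _ => (1:M)) i₀ z) := fun z => rfl
  have hmain : ∀ a : M, P a = Φ₀ (a ^ n) := by
    intro a
    rw [hrep a, hΦ₀def]
    exact main_identity φs g hn0 hsym hoa' a
  constructor
  · refine ⟨Φ₀, hmain, ?_⟩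
    intro Φ' hΦ'
    apply LinearMap.ext
    intro a
    have h1 := rep_eq_slot hn0 φs hsym Φ' (fun b => ((hΦ' b).symm.trans (hrep b))) a
    have h2 := rep_eq_slot hn0 φs hsym Φ₀ (fun b => ((hmain b).symm.trans (hrep b))) a
    rw [h1, h2]
  · intro φ hsymφ hrepφ Φ hΦ a
    have h1 := rep_eq_slot hn0 φ hsymφ Φ (fun b => ((hΦ b).symm.trans (hrepφ b))) a
    rw [h1, hslot]
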